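/- Let H be a bialgebra over a field, R a commutative H-module algebra, I an ideal and coideal of the smash product R#H, and A = R#H/I. If A is cocommutative as an R-coalgebra, then for all h ∈ H and x ∈ R, the congruence Σ (1#h₁)x ⊗ (1#h₂) ≡ Σ (1#h₁) ⊗ (1#h₂)x holds modulo I⊗(R#H) + (R#H)⊗I in (R#H) ⊗_R (R#H); i.e., Δ(A) ⊆ A ×_R A. -/

import Mathlib

open TensorProduct

/-- The submodule `I ⊗ A + A ⊗ I` of `A ⊗_R A` determined by a subset `I ⊆ A`. -/
def tensorIdealSpan (R A : Type*) [CommRing R] [Ring A] [Module R A] (I : Set A) :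
    Submodule R (TensorProduct R A A) :=
  Submodule.span R {z : TensorProduct R A A |
    (∃ u ∈ I, ∃ v : A, z = u ⊗ₜ[R] v) ∨ (∃ u ∈ I, ∃ v : A, z = v ⊗ₜ[R] u)}

set_option maxHeartbeats 1000000 in
set_option synthInstance.maxHeartbeats 400000 in
/-- Let `H` be a bialgebra over a field `k`, `R` a commutative `H`-module algebra,
`I` an ideal and coideal of the smash product `R#H` (here an abstract ring `A₀`
with structure maps `ιR`, `ιH` and the smash relation
`h·x = Σ (h₁⇀x)·h₂`), and suppose the quotient `A = R#H/I` is cocommutative as an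
`R`-coalgebra.  Then for all `h ∈ H` and `x ∈ R`,
`Σ (1#h₁)x ⊗ (1#h₂) ≡ Σ (1#h₁) ⊗ (1#h₂)x` modulo `I⊗(R#H) + (R#H)⊗I` in
`(R#H) ⊗_R (R#H)`; i.e. `Δ(A) ⊆ A ×_R A`. -/
theorem smash_quotient_cocomm_implies_timesR
    {k : Type*} [Field k]
    {H : Type*} [Ring H] [Bialgebra k H]
    {R : Type*} [CommRing R] [Algebra k R]
    -- a chosen finite Sweedler representation of the comultiplication of `H`
    (n : H → ℕ) (Δ₁ Δ₂ : H → ℕ → H)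
    (hrep : ∀ h : H, (Coalgebra.comul (R := k) h : H ⊗[k] H)
      = ∑ i ∈ Finset.range (n h), Δ₁ h i ⊗ₜ[k] Δ₂ h i)
    -- `R` is a (commutative, nonzero) left `H`-module algebra
    (act : H →ₗ[k] R →ₗ[k] R)
    (hact_one : ∀ x : R, act 1 x = x)
    (hact_mul : ∀ (g h : H) (x : R), act (g * h) x = act g (act h x))
    (hma_one : ∀ h : H, act h 1 = Coalgebra.counit (R := k) h • (1 : R))
    (hma_mul : ∀ (h : H) (x y : R),
      act h (x * y) = ∑ i ∈ Finset.range (n h), act (Δ₁ h i) x * act (Δ₂ h i) y)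
    -- the smash product `A₀ = R#H`, as an `R`-ring via `ιR`
    {A₀ : Type*} [Ring A₀] [Algebra k A₀] [Module R A₀]
    (ιR : R →ₐ[k] A₀) (ιH : H →ₗ[k] A₀)
    (hsmul : ∀ (x : R) (a : A₀), x • a = ιR x * a)
    (hιH_one : ιH 1 = 1)
    (hιH_mul : ∀ g h : H, ιH (g * h) = ιH g * ιH h)
    (hsmash : ∀ (h : H) (x : R),
      ιH h * ιR x = ∑ i ∈ Finset.range (n h), ιR (act (Δ₁ h i) x) * ιH (Δ₂ h i))
    (hspan : ∀ a : A₀, a ∈ Submodule.span R (Set.range ιH))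
    -- the `R`-coalgebra structure of `R#H`, by base extension of `H`
    (DA : A₀ →ₗ[R] TensorProduct R A₀ A₀)
    (hDA : ∀ (x : R) (h : H), DA (ιR x * ιH h)
      = ∑ i ∈ Finset.range (n h), (ιR x * ιH (Δ₁ h i)) ⊗ₜ[R] ιH (Δ₂ h i))
    -- `I` is a two-sided ideal of `R#H`
    (I : Set A₀) (hI0 : (0 : A₀) ∈ I)
    (hIadd : ∀ a b : A₀, a ∈ I → b ∈ I → a + b ∈ I)
    (hIneg : ∀ a : A₀, a ∈ I → -a ∈ I)
    (hImul_left : ∀ (a : A₀), a ∈ I → ∀ b : A₀, b * a ∈ I)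
    (hImul_right : ∀ (a : A₀), a ∈ I → ∀ b : A₀, a * b ∈ I)
    -- ... and a coideal
    (hIcoideal : ∀ a ∈ I, DA a ∈ tensorIdealSpan R A₀ I)
    -- the quotient `A = R#H/I` is cocommutative as an `R`-coalgebra
    (hcocomm : ∀ a : A₀,
      DA a - (TensorProduct.comm R A₀ A₀) (DA a) ∈ tensorIdealSpan R A₀ I) :
    ∀ (h : H) (x : R),
      (∑ i ∈ Finset.range (n h), (ιH (Δ₁ h i) * ιR x) ⊗ₜ[R] ιH (Δ₂ h i))
        - (∑ i ∈ Finset.range (n h), ιH (Δ₁ h i) ⊗ₜ[R] (ιH (Δ₂ h i) * ιR x))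
        ∈ tensorIdealSpan R A₀ I := by
  haveI hsc : SMulCommClass R k A₀ :=
    ⟨fun r c a => by rw [hsmul, hsmul, mul_smul_comm]⟩
  haveI hst : IsScalarTower k R A₀ :=
    ⟨fun c r a => by
      rw [hsmul, hsmul, Algebra.smul_def c r, map_mul, ιR.commutes, mul_assoc,
        ← Algebra.smul_def]⟩
  intro h x
  -- right multiplication by `ιR x` as an `R`-linear map
  set mr : A₀ →ₗ[R] A₀ :=
    { toFun := fun a => a * ιR x
      map_add' := fun a b => add_mul a b _
      map_smul' := fun r a => by
        simp only [RingHom.id_apply, hsmul, mul_assoc] } with hmr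
  have hmr' : ∀ a : A₀, mr a = a * ιR x := fun a => rfl
  -- `comm ∘ rTensor mr = lTensor mr ∘ comm`
  have hcs : ∀ t : TensorProduct R A₀ A₀,
      (TensorProduct.comm R A₀ A₀) (mr.rTensor A₀ t)
        = mr.lTensor A₀ ((TensorProduct.comm R A₀ A₀) t) := by
    intro t
    induction t using TensorProduct.induction_on with
    | zero => simp
    | tmul a b => simp
    | add t₁ t₂ h₁ h₂ => simp [map_add, h₁, h₂]
  -- `lTensor mr` maps `J` into `J`
  have hSxJ : ∀ z ∈ tensorIdealSpan R A₀ I, mr.lTensor A₀ z ∈ tensorIdealSpan R A₀ I := by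
    intro z hz
    induction hz using Submodule.span_induction with
    | mem z hzmem =>
      rcases hzmem with ⟨u, hu, v, rfl⟩ | ⟨u, hu, v, rfl⟩
      · exact Submodule.subset_span (Or.inl ⟨u, hu, v * ιR x, by simp [hmr']⟩)
      · exact Submodule.subset_span (Or.inr ⟨u * ιR x, hImul_right u hu (ιR x), v, by
          simp [hmr']⟩)
    | zero => simp
    | add t₁ t₂ _ _ h₁ h₂ => rw [map_add]; exact Submodule.add_mem _ h₁ h₂
    | smul r t _ ht => rw [map_smul]; exact Submodule.smul_mem _ r ht
  -- transport map for three tensor legs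
  have Lex : ∃ L : H ⊗[k] (H ⊗[k] H) →ₗ[k] TensorProduct R A₀ A₀,
      ∀ g₁ g₂ g₃ : H,
        L (g₁ ⊗ₜ[k] (g₂ ⊗ₜ[k] g₃)) = (ιR (act g₁ x) * ιH g₂) ⊗ₜ[R] ιH g₃ := by
    refine ⟨TensorProduct.lift ((TensorProduct.uncurry (RingHom.id k) H H (TensorProduct R A₀ A₀)) ∘ₗ
      (((LinearMap.mul k A₀).compl₁₂ (ιR.toLinearMap ∘ₗ (act.flip x)) ιH).compr₂
        ((LinearMap.mk₂ k (fun a b : A₀ => a ⊗ₜ[R] b)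
          (fun a a' b => TensorProduct.add_tmul a a' b)
          (fun c a b => (TensorProduct.smul_tmul' c a b).symm)
          (fun a b b' => TensorProduct.tmul_add a b b')
          (fun c a b => TensorProduct.tmul_smul c a b)).compl₂ ιH))), ?_⟩
    intro g₁ g₂ g₃
    simp [TensorProduct.lift.tmul, TensorProduct.uncurry_apply,
      LinearMap.compr₂_apply, LinearMap.compl₂_apply, LinearMap.compl₁₂_apply,
      LinearMap.mul_apply', LinearMap.mk₂_apply]
  obtain ⟨L, hL⟩ := Lex
  -- coassociativity, in explicit Sweedler form
  have h3 : ∀ g : H,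
      (∑ i ∈ Finset.range (n g), ∑ j ∈ Finset.range (n (Δ₁ g i)),
        Δ₁ (Δ₁ g i) j ⊗ₜ[k] (Δ₂ (Δ₁ g i) j ⊗ₜ[k] Δ₂ g i))
      = ∑ i ∈ Finset.range (n g), ∑ j ∈ Finset.range (n (Δ₂ g i)),
        Δ₁ g i ⊗ₜ[k] (Δ₁ (Δ₂ g i) j ⊗ₜ[k] Δ₂ (Δ₂ g i) j) := by
    intro g
    have hco := Coalgebra.coassoc_apply (R := k) (A := H) g
    rw [hrep g] at hco
    simp only [map_sum, LinearMap.rTensor_tmul, LinearMap.lTensor_tmul, hrep,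
      TensorProduct.sum_tmul, TensorProduct.tmul_sum, map_sum,
      TensorProduct.assoc_tmul] at hco
    exact hco
  -- the key coassociativity identity in `A₀ ⊗[R] A₀`
  have key : ∀ g : H,
      (∑ i ∈ Finset.range (n g), ∑ j ∈ Finset.range (n (Δ₁ g i)),
        (ιR (act (Δ₁ (Δ₁ g i) j) x) * ιH (Δ₂ (Δ₁ g i) j)) ⊗ₜ[R] ιH (Δ₂ g i))
      = ∑ i ∈ Finset.range (n g), ∑ j ∈ Finset.range (n (Δ₂ g i)),
        (ιR (act (Δ₁ g i) x) * ιH (Δ₁ (Δ₂ g i) j)) ⊗ₜ[R] ιH (Δ₂ (Δ₂ g i) j) := by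
    intro g
    have := congrArg L (h3 g)
    simpa only [map_sum, hL] using this
  -- `DA (ιH g) = Σ ιH g₁ ⊗ ιH g₂`
  have hDAH : ∀ g : H, DA (ιH g)
      = ∑ i ∈ Finset.range (n g), ιH (Δ₁ g i) ⊗ₜ[R] ιH (Δ₂ g i) := by
    intro g
    have := hDA 1 g
    simpa using this
  -- (★) `DA (a * ιR x) = (mr ⊗ id) (DA a)` for all `a`
  have star : ∀ a : A₀, DA (a * ιR x) = mr.rTensor A₀ (DA a) := by
    intro a
    have hmem := hspan a
    induction hmem using Submodule.span_induction with
    | mem a ha =>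
      obtain ⟨g, rfl⟩ := ha
      have lhs : DA (ιH g * ιR x)
          = ∑ i ∈ Finset.range (n g), ∑ j ∈ Finset.range (n (Δ₂ g i)),
            (ιR (act (Δ₁ g i) x) * ιH (Δ₁ (Δ₂ g i) j)) ⊗ₜ[R] ιH (Δ₂ (Δ₂ g i) j) := by
        rw [hsmash g x, map_sum]
        exact Finset.sum_congr rfl fun i _ => hDA (act (Δ₁ g i) x) (Δ₂ g i)
      have rhs : mr.rTensor A₀ (DA (ιH g))
          = ∑ i ∈ Finset.range (n g), ∑ j ∈ Finset.range (n (Δ₁ g i)),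
            (ιR (act (Δ₁ (Δ₁ g i) j) x) * ιH (Δ₂ (Δ₁ g i) j)) ⊗ₜ[R] ιH (Δ₂ g i) := by
        rw [hDAH g, map_sum]
        refine Finset.sum_congr rfl fun i _ => ?_
        rw [LinearMap.rTensor_tmul, hmr', hsmash (Δ₁ g i) x, TensorProduct.sum_tmul]
      rw [lhs, rhs, key g]
    | zero => simp
    | add a b _ _ ha hb => rw [add_mul, map_add, map_add, map_add, ha, hb]
    | smul r a _ ha =>
      have h1 : (r • a) * ιR x = r • (a * ιR x) := by rw [hsmul, hsmul, mul_assoc]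
      rw [h1, map_smul, map_smul, map_smul, ha]
  -- identify the goal with `rTensor mr (DA (ιH h)) - lTensor mr (DA (ιH h))`
  have hT : mr.rTensor A₀ (DA (ιH h))
      = ∑ i ∈ Finset.range (n h), (ιH (Δ₁ h i) * ιR x) ⊗ₜ[R] ιH (Δ₂ h i) := by
    rw [hDAH h, map_sum]
    exact Finset.sum_congr rfl fun i _ => by rw [LinearMap.rTensor_tmul, hmr']
  have hS : mr.lTensor A₀ (DA (ιH h))
      = ∑ i ∈ Finset.range (n h), ιH (Δ₁ h i) ⊗ₜ[R] (ιH (Δ₂ h i) * ιR x) := by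
    rw [hDAH h, map_sum]
    exact Finset.sum_congr rfl fun i _ => by rw [LinearMap.lTensor_tmul, hmr']
  rw [← hT, ← hS]
  have decomp : mr.rTensor A₀ (DA (ιH h)) - mr.lTensor A₀ (DA (ιH h))
      = (DA (ιH h * ιR x) - (TensorProduct.comm R A₀ A₀) (DA (ιH h * ιR x)))
        + mr.lTensor A₀
            ((TensorProduct.comm R A₀ A₀) (DA (ιH h)) - DA (ιH h)) := by
    rw [star (ιH h), hcs (DA (ιH h)), map_sub]
    abel
  rw [decomp]
  refine Submodule.add_mem _ (hcocomm (ιH h * ιR x)) ?_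
  have : (TensorProduct.comm R A₀ A₀) (DA (ιH h)) - DA (ιH h)
      = -(DA (ιH h) - (TensorProduct.comm R A₀ A₀) (DA (ιH h))) := by abel
  rw [this, map_neg]
  exact Submodule.neg_mem _ (hSxJ _ (hcocomm (ιH h)))
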